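/- arXiv:math/0702889 — 7 statements merged into one kernel-verified Lean document; each statement's English description precedes it below -/
import Mathlib

section
/- Let a < b be real numbers and let E be a real inner product space. Let ρ : [a,b] → E be continuous on [a,b], twice differentiable on (a,b), with ρ(a) = ρ(b) = 0. Let λ : [a,b] → ℝ and f : [a,b] → E be continuous, and suppose that for every s ∈ (a,b) there is a linear map H_s : E → E with ⟨H_s v, v⟩ ≥ λ(s)²‖v‖² for all v ∈ E, such that ρ''(s) = H_s(ρ(s)) − f(s). Let u : [a,b] → ℝ be continuous on [a,b], twice differentiable on (a,b), with u(a) = u(b) = 0 and u''(s) = λ(s)² u(s) − ‖f(s)‖ for all s ∈ (a,b). Then ‖ρ(s)‖ ≤ u(s) for all s ∈ [a,b]. -/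
open scoped RealInnerProductSpace

set_option maxHeartbeats 1600000 in
/-- Comparison estimate from the proof of Theorem 4 (Nahm moduli spaces):
if `ρ'' = H_s ρ - f` with `⟨H_s v, v⟩ ≥ λ(s)²‖v‖²`, `ρ(a) = ρ(b) = 0`, and
`u'' = λ² u - ‖f‖` with `u(a) = u(b) = 0`, then `‖ρ(s)‖ ≤ u(s)` on `[a,b]`. -/
theorem curvature_nahm_comparison
    {E : Type*} [NormedAddCommGroup E] [InnerProductSpace ℝ E]
    (a b : ℝ) (hab : a < b)
    (ρ ρ' ρ'' : ℝ → E) (lam : ℝ → ℝ) (f : ℝ → E) (u u' u'' : ℝ → ℝ)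
    (hρc : ContinuousOn ρ (Set.Icc a b))
    (hρd : ∀ s ∈ Set.Ioo a b, HasDerivAt ρ (ρ' s) s)
    (hρd2 : ∀ s ∈ Set.Ioo a b, HasDerivAt ρ' (ρ'' s) s)
    (hρa : ρ a = 0) (hρb : ρ b = 0)
    (hlamc : ContinuousOn lam (Set.Icc a b))
    (hfc : ContinuousOn f (Set.Icc a b))
    (hH : ∀ s ∈ Set.Ioo a b, ∃ H : E →ₗ[ℝ] E,
      (∀ v : E, (lam s) ^ 2 * ‖v‖ ^ 2 ≤ ⟪H v, v⟫) ∧ ρ'' s = H (ρ s) - f s)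
    (huc : ContinuousOn u (Set.Icc a b))
    (hud : ∀ s ∈ Set.Ioo a b, HasDerivAt u (u' s) s)
    (hud2 : ∀ s ∈ Set.Ioo a b, HasDerivAt u' (u'' s) s)
    (hua : u a = 0) (hub : u b = 0)
    (hueq : ∀ s ∈ Set.Ioo a b, u'' s = (lam s) ^ 2 * u s - ‖f s‖) :
    ∀ s ∈ Set.Icc a b, ‖ρ s‖ ≤ u s := by
  classical
  set m : ℝ := (a + b) / 2 with hm
  set C : ℝ := (b - a) ^ 2 with hC
  have hCpos : 0 < C := by have := sub_pos.mpr hab; positivity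
  set v : ℝ → ℝ := fun s => C - (s - m) ^ 2 with hv
  have hvpos : ∀ s ∈ Set.Icc a b, 0 < v s := by
    rintro s ⟨h1, h2⟩
    simp only [hv, hC, hm]
    nlinarith
  have hvle : ∀ s, v s ≤ C := by
    intro s; simp only [hv]; nlinarith [sq_nonneg (s - m)]
  have hvc : Continuous v := by continuity
  -- key estimate with ε-perturbation
  have key : ∀ ε : ℝ, 0 < ε → ∀ s ∈ Set.Icc a b, ‖ρ s‖ ≤ u s + ε * v s := by
    intro ε hε
    by_contra hcon
    push_neg at hcon
    obtain ⟨s₁, hs₁, hφ₁⟩ := hcon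
    set φ : ℝ → ℝ := fun s => ‖ρ s‖ - u s - ε * v s with hφ
    have hφc : ContinuousOn φ (Set.Icc a b) :=
      ((hρc.norm.sub huc).sub ((continuous_const.mul hvc).continuousOn))
    obtain ⟨s₀, hs₀, hmax⟩ :=
      isCompact_Icc.exists_isMaxOn (Set.nonempty_Icc.mpr hab.le) hφc
    have hφ0 : 0 < φ s₀ := by
      have h1 : 0 < φ s₁ := by simp only [hφ]; linarith
      exact lt_of_lt_of_le h1 (hmax hs₁)
    -- s₀ is interior
    have hs₀I : s₀ ∈ Set.Ioo a b := by
      rcases hs₀.1.lt_or_eq with h | h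
      · rcases hs₀.2.lt_or_eq with h' | h'
        · exact ⟨h, h'⟩
        · exfalso
          have : φ s₀ = -(ε * v b) := by
            simp only [hφ, h', hρb, hub, norm_zero]; ring
          have := hvpos b (Set.right_mem_Icc.mpr hab.le)
          nlinarith
      · exfalso
        have : φ s₀ = -(ε * v a) := by
          simp only [hφ, ← h, hρa, hua, norm_zero]; ring
        have := hvpos a (Set.left_mem_Icc.mpr hab.le)
        nlinarith
    obtain ⟨H, hHpos, hHeq⟩ := hH s₀ hs₀I
    -- the comparison direction e
    set e : E := if h : ρ s₀ = 0 then 0 else ‖ρ s₀‖⁻¹ • ρ s₀ with he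
    have hne : ‖e‖ ≤ 1 := by
      by_cases h : ρ s₀ = 0
      · simp [he, h]
      · have hn : ‖ρ s₀‖ ≠ 0 := norm_ne_zero_iff.mpr h
        simp only [he, dif_neg h, norm_smul, norm_inv, norm_norm]
        rw [inv_mul_cancel₀ hn]
    have hip : ⟪ρ s₀, e⟫ = ‖ρ s₀‖ := by
      by_cases h : ρ s₀ = 0
      · simp [he, h]
      · have hn : ‖ρ s₀‖ ≠ 0 := norm_ne_zero_iff.mpr h
        simp only [he, dif_neg h, real_inner_smul_right, real_inner_self_eq_norm_sq]
        field_simp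
    have hHe : (lam s₀) ^ 2 * ‖ρ s₀‖ ≤ ⟪H (ρ s₀), e⟫ := by
      by_cases h : ρ s₀ = 0
      · simp [he, h]
      · have hn : (0:ℝ) < ‖ρ s₀‖ := norm_pos_iff.mpr h
        simp only [he, dif_neg h, real_inner_smul_right]
        have h1 := hHpos (ρ s₀)
        have h2 : ‖ρ s₀‖⁻¹ * (lam s₀ ^ 2 * ‖ρ s₀‖ ^ 2) ≤ ‖ρ s₀‖⁻¹ * ⟪H (ρ s₀), ρ s₀⟫ :=
          mul_le_mul_of_nonneg_left h1 (inv_nonneg.mpr hn.le)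
        have h3 : ‖ρ s₀‖⁻¹ * (lam s₀ ^ 2 * ‖ρ s₀‖ ^ 2) = lam s₀ ^ 2 * ‖ρ s₀‖ := by
          field_simp
        linarith
    -- the scalar function g
    set g : ℝ → ℝ := fun s => ⟪ρ s, e⟫ - u s - ε * v s with hg
    have hgle : ∀ s ∈ Set.Icc a b, g s ≤ φ s := by
      intro s hs
      have h1 : ⟪ρ s, e⟫ ≤ ‖ρ s‖ := by
        calc ⟪ρ s, e⟫ ≤ ‖ρ s‖ * ‖e‖ := real_inner_le_norm _ _
          _ ≤ ‖ρ s‖ * 1 := by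
              exact mul_le_mul_of_nonneg_left hne (norm_nonneg _)
          _ = ‖ρ s‖ := mul_one _
      simp only [hg, hφ]; linarith
    have hg0 : g s₀ = φ s₀ := by simp only [hg, hφ, hip]
    have hgmax : IsMaxOn g (Set.Icc a b) s₀ := by
      intro s hs
      have := hgle s hs
      have := hmax hs
      simp only [Set.mem_setOf_eq] at *
      linarith [hgle s hs, hmax hs]
    -- derivative of g
    set G : ℝ → ℝ := fun s => ⟪ρ' s, e⟫ - u' s + ε * (2 * (s - m)) with hG
    have hvderiv : ∀ s : ℝ, HasDerivAt v (-(2 * (s - m))) s := by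
      intro s
      have h1 : HasDerivAt (fun t : ℝ => (t - m) ^ 2) (2 * (s - m)) s := by
        have := ((hasDerivAt_id s).sub_const m).pow 2
        simpa [Pi.pow_def] using this
      simpa using (h1.const_sub C)
    have hgderiv : ∀ s ∈ Set.Ioo a b, HasDerivAt g (G s) s := by
      intro s hs
      have h1 : HasDerivAt (fun t => ⟪ρ t, e⟫) (⟪ρ' s, e⟫) s := by
        have := (hρd s hs).inner ℝ (hasDerivAt_const s e)
        simpa using this
      have := (h1.sub (hud s hs)).sub (((hvderiv s).const_mul ε))
      simpa only [hG, mul_neg, sub_neg_eq_add, Pi.sub_def] using this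
    set D : ℝ := ⟪ρ'' s₀, e⟫ - u'' s₀ + ε * 2 with hD
    have hGderiv : HasDerivAt G D s₀ := by
      have h1 : HasDerivAt (fun t => ⟪ρ' t, e⟫) (⟪ρ'' s₀, e⟫) s₀ := by
        have := (hρd2 s₀ hs₀I).inner ℝ (hasDerivAt_const s₀ e)
        simpa using this
      have h2 : HasDerivAt (fun t : ℝ => ε * (2 * (t - m))) (ε * 2) s₀ := by
        have := (((hasDerivAt_id s₀).sub_const m).const_mul 2).const_mul ε
        simpa using this
      have := (h1.sub (hud2 s₀ hs₀I)).add h2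
      simpa only [hG, hD, Pi.sub_def, Pi.add_def] using this
    -- D > 0
    have hDpos : 0 < D := by
      have hfe : ⟪f s₀, e⟫ ≤ ‖f s₀‖ := by
        calc ⟪f s₀, e⟫ ≤ ‖f s₀‖ * ‖e‖ := real_inner_le_norm _ _
          _ ≤ ‖f s₀‖ * 1 := mul_le_mul_of_nonneg_left hne (norm_nonneg _)
          _ = ‖f s₀‖ := mul_one _
      have h1 : ⟪ρ'' s₀, e⟫ = ⟪H (ρ s₀), e⟫ - ⟪f s₀, e⟫ := by
        rw [hHeq, inner_sub_left]
      have h2 : u'' s₀ = (lam s₀) ^ 2 * u s₀ - ‖f s₀‖ := hueq s₀ hs₀I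
      have h3 : 0 < ‖ρ s₀‖ - u s₀ := by
        have := hvpos s₀ hs₀
        have : 0 < ε * v s₀ := mul_pos hε this
        simp only [hφ] at hφ0
        linarith
      have h4 : lam s₀ ^ 2 * u s₀ ≤ lam s₀ ^ 2 * ‖ρ s₀‖ := by
        nlinarith [sq_nonneg (lam s₀)]
      show 0 < ⟪ρ'' s₀, e⟫ - u'' s₀ + ε * 2
      rw [h1, h2]
      linarith [hHe]
    -- first derivative vanishes at s₀
    have hG0 : G s₀ = 0 := by
      have hloc : IsLocalMax g s₀ :=
        hgmax.isLocalMax (Icc_mem_nhds hs₀I.1 hs₀I.2)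
      exact hloc.hasDerivAt_eq_zero (hgderiv s₀ hs₀I)
    -- find an interval to the right where G > 0
    have hslope : Filter.Tendsto (slope G s₀) (nhdsWithin s₀ {s₀}ᶜ) (nhds D) :=
      hasDerivAt_iff_tendsto_slope.mp hGderiv
    have hev : ∀ᶠ t in nhdsWithin s₀ {s₀}ᶜ, 0 < slope G s₀ t :=
      hslope.eventually (eventually_gt_nhds hDpos)
    have hevI : ∀ᶠ t in nhdsWithin s₀ {s₀}ᶜ, t ∈ Set.Ioo a b :=
      Filter.eventually_inf_principal.mpr
        (Filter.eventually_of_mem (Ioo_mem_nhds hs₀I.1 hs₀I.2) (fun t ht _ => ht))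
    have hboth := hev.and hevI
    have hmono : nhdsWithin s₀ (Set.Ioi s₀) ≤ nhdsWithin s₀ {s₀}ᶜ :=
      nhdsWithin_mono s₀ (fun t ht => ne_of_gt ht)
    have hboth' : ∀ᶠ t in nhdsWithin s₀ (Set.Ioi s₀),
        0 < slope G s₀ t ∧ t ∈ Set.Ioo a b := hboth.filter_mono hmono
    obtain ⟨c, hc, hsub⟩ := mem_nhdsGT_iff_exists_Ioo_subset.mp hboth'
    have hGpos : ∀ t ∈ Set.Ioo s₀ c, 0 < G t := by
      intro t ht
      obtain ⟨hsl, _⟩ := hsub ht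
      have hts : 0 < t - s₀ := sub_pos.mpr ht.1
      rw [slope_def_field, hG0, sub_zero] at hsl
      have := mul_pos hsl hts
      rw [div_mul_cancel₀ _ hts.ne'] at this
      exact this
    set t : ℝ := (s₀ + c) / 2 with ht
    have hsc : s₀ < c := hc
    have htI : t ∈ Set.Ioo s₀ c := by
      constructor <;> (simp only [ht]; linarith)
    have htab : t ∈ Set.Ioo a b := (hsub htI).2
    -- g is strictly increasing on [s₀, t], contradiction with max at s₀
    have hsubIcc : Set.Icc s₀ t ⊆ Set.Icc a b := by
      intro x hx
      exact ⟨le_trans hs₀I.1.le hx.1, le_trans hx.2 htab.2.le⟩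
    have hgc : ContinuousOn g (Set.Icc a b) := by
      have h1 : ContinuousOn (fun s => ⟪ρ s, e⟫) (Set.Icc a b) :=
        hρc.inner continuousOn_const
      exact (h1.sub huc).sub (continuous_const.mul hvc).continuousOn
    have hmonoG : StrictMonoOn g (Set.Icc s₀ t) := by
      apply strictMonoOn_of_deriv_pos (convex_Icc s₀ t) (hgc.mono hsubIcc)
      intro x hx
      rw [interior_Icc] at hx
      have hxc : x ∈ Set.Ioo s₀ c := ⟨hx.1, lt_trans hx.2 htI.2⟩
      have hxab : x ∈ Set.Ioo a b := (hsub hxc).2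
      rw [(hgderiv x hxab).deriv]
      exact hGpos x hxc
    have h5 : g s₀ < g t :=
      hmonoG (Set.left_mem_Icc.mpr htI.1.le) (Set.right_mem_Icc.mpr htI.1.le) htI.1
    have h6 : g t ≤ g s₀ := by
      calc g t ≤ φ t := hgle t (Set.mem_Icc_of_Ioo htab)
        _ ≤ φ s₀ := hmax (Set.mem_Icc_of_Ioo htab)
        _ = g s₀ := hg0.symm
    linarith
  -- conclude by letting ε → 0
  intro s hs
  refine le_of_forall_pos_le_add ?_
  intro ε hε
  have h1 := key (ε / C) (by positivity) s hs
  have h2 := hvle s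
  have h3 : ε / C * v s ≤ ε / C * C :=
    mul_le_mul_of_nonneg_left h2 (by positivity)
  rw [div_mul_cancel₀ _ hCpos.ne'] at h3
  linarith
end

section
/- Let a < b be real numbers and let E be a real inner product space. Let ρ : [a,b] → E be continuous on [a,b], twice differentiable on (a,b), with ρ(a) = ρ(b) = 0. Let f : [a,b] → E be continuous, and suppose that for every s ∈ (a,b) there is a linear map H_s : E → E with ⟨H_s v, v⟩ ≥ 0 for all v ∈ E, such that ρ''(s) = H_s(ρ(s)) − f(s). Then for every s ∈ [a,b], ‖ρ(s)‖ ≤ ((b−s)(s−a)/(b−a)) · ∫_a^b ‖f(τ)‖ dτ; in particular sup_{s∈[a,b]} ‖ρ(s)‖ ≤ ((b−a)/4) · ∫_a^b ‖f(τ)‖ dτ. -/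
open scoped RealInnerProductSpace
open Set MeasureTheory intervalIntegral

/-- A continuous function on `[a,b]`, twice differentiable on `(a,b)` with nonnegative
second derivative and nonpositive boundary values, is nonpositive. -/
lemma nahm_nonpos_aux {a b : ℝ} (hab : a < b) {u u' u'' : ℝ → ℝ}
    (hc : ContinuousOn u (Set.Icc a b))
    (hd : ∀ s ∈ Set.Ioo a b, HasDerivAt u (u' s) s)
    (hd2 : ∀ s ∈ Set.Ioo a b, HasDerivAt u' (u'' s) s)
    (hnn : ∀ s ∈ Set.Ioo a b, 0 ≤ u'' s)
    (ha : u a ≤ 0) (hb : u b ≤ 0) : ∀ s ∈ Set.Icc a b, u s ≤ 0 := by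
  have hconv : ConvexOn ℝ (Set.Icc a b) u := by
    apply convexOn_of_hasDerivWithinAt2_nonneg (f' := u') (f'' := u'') (convex_Icc a b) hc
    · rw [interior_Icc]; exact fun x hx => (hd x hx).hasDerivWithinAt
    · rw [interior_Icc]; exact fun x hx => (hd2 x hx).hasDerivWithinAt
    · rw [interior_Icc]; exact hnn
  intro s hs
  have hba : (0 : ℝ) < b - a := sub_pos.2 hab
  have hl0 : 0 ≤ (b - s) / (b - a) := div_nonneg (by linarith [hs.2]) hba.le
  have hm0 : 0 ≤ (s - a) / (b - a) := div_nonneg (by linarith [hs.1]) hba.le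
  have hsum : (b - s) / (b - a) + (s - a) / (b - a) = 1 := by field_simp; ring
  have key := hconv.2 (Set.left_mem_Icc.2 hab.le) (Set.right_mem_Icc.2 hab.le) hl0 hm0 hsum
  simp only [smul_eq_mul] at key
  have hpt : (b - s) / (b - a) * a + (s - a) / (b - a) * b = s := by
    field_simp; ring
  rw [hpt] at key
  nlinarith [mul_nonneg hl0 (neg_nonneg.2 ha), mul_nonneg hm0 (neg_nonneg.2 hb)]

lemma nahm_green_aux {a b : ℝ} (hab : a < b) {m : ℝ → ℝ}
    (hmc : ContinuousOn m (Set.Icc a b)) (hm0 : ∀ τ, 0 ≤ m τ) :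
    ∃ g g' : ℝ → ℝ,
      ContinuousOn g (Set.Icc a b) ∧
      (∀ s ∈ Set.Ioo a b, HasDerivAt g (g' s) s) ∧
      (∀ s ∈ Set.Ioo a b, HasDerivAt g' (-(m s)) s) ∧
      g a = 0 ∧ g b = 0 ∧
      (∀ s ∈ Set.Icc a b,
        g s ≤ (b - s) * (s - a) / (b - a) * ∫ τ in a..b, m τ) := by
  have hba : (0 : ℝ) < b - a := sub_pos.2 hab
  set I1 : ℝ → ℝ := fun τ => (τ - a) * m τ with hI1def
  set I2 : ℝ → ℝ := fun τ => (b - τ) * m τ with hI2def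
  have hI1c : ContinuousOn I1 (Icc a b) :=
    (continuousOn_id.sub continuousOn_const).mul hmc
  have hI2c : ContinuousOn I2 (Icc a b) :=
    (continuousOn_const.sub continuousOn_id).mul hmc
  have hsub : ∀ c ∈ Icc a b, ∀ d ∈ Icc a b, uIcc c d ⊆ Icc a b := fun c hc d hd =>
    uIcc_subset_Icc hc hd
  have int1 : ∀ c ∈ Icc a b, ∀ d ∈ Icc a b, IntervalIntegrable I1 volume c d :=
    fun c hc d hd => (hI1c.mono (hsub c hc d hd)).intervalIntegrable
  have int2 : ∀ c ∈ Icc a b, ∀ d ∈ Icc a b, IntervalIntegrable I2 volume c d :=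
    fun c hc d hd => (hI2c.mono (hsub c hc d hd)).intervalIntegrable
  have intm : ∀ c ∈ Icc a b, ∀ d ∈ Icc a b, IntervalIntegrable m volume c d :=
    fun c hc d hd => (hmc.mono (hsub c hc d hd)).intervalIntegrable
  have hamem : a ∈ Icc a b := left_mem_Icc.2 hab.le
  have hbmem : b ∈ Icc a b := right_mem_Icc.2 hab.le
  set P : ℝ → ℝ := fun s => ∫ τ in a..s, I1 τ with hPdef
  set R : ℝ → ℝ := fun s => ∫ τ in a..s, I2 τ with hRdef
  set C : ℝ := ∫ τ in a..b, I2 τ with hCdef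
  set Q : ℝ → ℝ := fun s => C - R s with hQdef
  -- derivative lemmas
  have hcontAt : ∀ s ∈ Ioo a b, ∀ {F : ℝ → ℝ}, ContinuousOn F (Icc a b) → ContinuousAt F s :=
    fun s hs F hF => hF.continuousAt (Icc_mem_nhds hs.1 hs.2)
  have hmeas : ∀ s ∈ Ioo a b, ∀ {F : ℝ → ℝ}, ContinuousOn F (Icc a b) →
      StronglyMeasurableAtFilter F (nhds s) volume := fun s hs F hF =>
    ContinuousOn.stronglyMeasurableAtFilter isOpen_Ioo (hF.mono Ioo_subset_Icc_self) s hs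
  have hP' : ∀ s ∈ Ioo a b, HasDerivAt P (I1 s) s := fun s hs =>
    integral_hasDerivAt_right (int1 a hamem s (Ioo_subset_Icc_self hs))
      (hmeas s hs hI1c) (hcontAt s hs hI1c)
  have hR' : ∀ s ∈ Ioo a b, HasDerivAt R (I2 s) s := fun s hs =>
    integral_hasDerivAt_right (int2 a hamem s (Ioo_subset_Icc_self hs))
      (hmeas s hs hI2c) (hcontAt s hs hI2c)
  have hQ' : ∀ s ∈ Ioo a b, HasDerivAt Q (-(I2 s)) s := fun s hs => by
    have h := (hasDerivAt_const s C).sub (hR' s hs)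
    rw [zero_sub] at h
    exact h
  have hQeq : ∀ s ∈ Icc a b, Q s = ∫ τ in s..b, I2 τ := by
    intro s hs
    have := integral_add_adjacent_intervals (int2 a hamem s hs) (int2 s hs b hbmem)
    simp only [Q, C, R]
    linarith [this]
  -- the Green's potential
  refine ⟨fun s => ((b - s) * P s + (s - a) * Q s) / (b - a),
    fun s => (Q s - P s) / (b - a), ?_, ?_, ?_, ?_, ?_, ?_⟩
  · -- continuity
    have hPc : ContinuousOn P (Icc a b) := by
      have := intervalIntegral.continuousOn_primitive_interval
        (μ := volume) (f := I1) (a := a) (b := b)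
        (by rw [uIcc_of_le hab.le]; exact hI1c.integrableOn_Icc)
      rwa [uIcc_of_le hab.le] at this
    have hRc : ContinuousOn R (Icc a b) := by
      have := intervalIntegral.continuousOn_primitive_interval
        (μ := volume) (f := I2) (a := a) (b := b)
        (by rw [uIcc_of_le hab.le]; exact hI2c.integrableOn_Icc)
      rwa [uIcc_of_le hab.le] at this
    have hQc : ContinuousOn Q (Icc a b) := continuousOn_const.sub hRc
    exact (((continuousOn_const.sub continuousOn_id).mul hPc).add
      ((continuousOn_id.sub continuousOn_const).mul hQc)).div_const _
  · -- first derivative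
    intro s hs
    have h1 : HasDerivAt (fun s => b - s) (-1) s := (hasDerivAt_id s).const_sub b
    have h2 : HasDerivAt (fun s => s - a) 1 s := (hasDerivAt_id s).sub_const a
    have := ((h1.mul (hP' s hs)).add (h2.mul (hQ' s hs))).div_const (b - a)
    refine this.congr_deriv ?_
    simp only [I1, I2]
    field_simp
    ring
  · -- second derivative
    intro s hs
    have := ((hQ' s hs).sub (hP' s hs)).div_const (b - a)
    refine this.congr_deriv ?_
    simp only [I1, I2]
    field_simp
    ring
  · simp [P, Q]
  · have : Q b = 0 := by
      have := hQeq b hbmem; simpa using this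
    simp [this]
  · -- the bound
    intro s hs
    set Im : ℝ := ∫ τ in a..b, m τ with hImdef
    have hbs : (0:ℝ) ≤ b - s := by linarith [hs.2]
    have hsa : (0:ℝ) ≤ s - a := by linarith [hs.1]
    have hP_le : P s ≤ (s - a) * ∫ τ in a..s, m τ := by
      calc P s ≤ ∫ τ in a..s, (s - a) * m τ := by
            apply integral_mono_on hs.1 (int1 a hamem s hs)
              ((intm a hamem s hs).const_mul _)
            intro τ hτ
            exact mul_le_mul_of_nonneg_right (by linarith [hτ.2]) (hm0 τ)
        _ = (s - a) * ∫ τ in a..s, m τ := intervalIntegral.integral_const_mul _ _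
    have hQ_le : Q s ≤ (b - s) * ∫ τ in s..b, m τ := by
      rw [hQeq s hs]
      calc (∫ τ in s..b, I2 τ) ≤ ∫ τ in s..b, (b - s) * m τ := by
            apply integral_mono_on hs.2 (int2 s hs b hbmem)
              ((intm s hs b hbmem).const_mul _)
            intro τ hτ
            exact mul_le_mul_of_nonneg_right (by linarith [hτ.1]) (hm0 τ)
        _ = (b - s) * ∫ τ in s..b, m τ := intervalIntegral.integral_const_mul _ _
    have hadd : (∫ τ in a..s, m τ) + (∫ τ in s..b, m τ) = Im :=
      integral_add_adjacent_intervals (intm a hamem s hs) (intm s hs b hbmem)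
    have hnum : (b - s) * P s + (s - a) * Q s ≤ (b - s) * (s - a) * Im := by
      have e1 := mul_le_mul_of_nonneg_left hP_le hbs
      have e2 := mul_le_mul_of_nonneg_left hQ_le hsa
      have e3 : (b - s) * ((s - a) * ∫ τ in a..s, m τ)
          + (s - a) * ((b - s) * ∫ τ in s..b, m τ) = (b - s) * (s - a) * Im := by
        rw [← hadd]; ring
      linarith
    calc ((b - s) * P s + (s - a) * Q s) / (b - a)
        ≤ ((b - s) * (s - a) * Im) / (b - a) := by gcongr
      _ = (b - s) * (s - a) / (b - a) * Im := by ring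

/-- Case `λ = 0` of the comparison estimate: `ρ'' = H_s ρ - f` with `H_s` nonnegative
and `ρ(a) = ρ(b) = 0` imply the Green's-function bound
`‖ρ(s)‖ ≤ ((b-s)(s-a)/(b-a)) ∫_a^b ‖f‖`, and in particular
`‖ρ(s)‖ ≤ ((b-a)/4) ∫_a^b ‖f‖` for all `s ∈ [a,b]`. -/
theorem curvature_nahm_green_bound
    {E : Type*} [NormedAddCommGroup E] [InnerProductSpace ℝ E]
    (a b : ℝ) (hab : a < b)
    (ρ ρ' ρ'' : ℝ → E) (f : ℝ → E)
    (hρc : ContinuousOn ρ (Set.Icc a b))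
    (hρd : ∀ s ∈ Set.Ioo a b, HasDerivAt ρ (ρ' s) s)
    (hρd2 : ∀ s ∈ Set.Ioo a b, HasDerivAt ρ' (ρ'' s) s)
    (hρa : ρ a = 0) (hρb : ρ b = 0)
    (hfc : ContinuousOn f (Set.Icc a b))
    (hH : ∀ s ∈ Set.Ioo a b, ∃ H : E →ₗ[ℝ] E,
      (∀ v : E, 0 ≤ ⟪H v, v⟫) ∧ ρ'' s = H (ρ s) - f s) :
    (∀ s ∈ Set.Icc a b,
      ‖ρ s‖ ≤ (b - s) * (s - a) / (b - a) * ∫ τ in a..b, ‖f τ‖) ∧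
    (∀ s ∈ Set.Icc a b, ‖ρ s‖ ≤ (b - a) / 4 * ∫ τ in a..b, ‖f τ‖) := by
  have hba : (0 : ℝ) < b - a := sub_pos.2 hab
  set m : ℝ → ℝ := fun τ => ‖f τ‖ with hmdef
  have hmc : ContinuousOn m (Set.Icc a b) := hfc.norm
  have hm0 : ∀ τ, 0 ≤ m τ := fun τ => norm_nonneg _
  obtain ⟨g, g', hgc, hg', hg'', hga, hgb, hgbound⟩ := nahm_green_aux hab hmc hm0
  -- main estimate: ‖ρ s‖ ≤ g s
  have key : ∀ s₀ ∈ Set.Icc a b, ‖ρ s₀‖ ≤ g s₀ := by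
    intro s₀ hs₀
    refine le_of_forall_pos_le_add fun ε hε => ?_
    set sq : ℝ → ℝ := fun s => ⟪ρ s, ρ s⟫ + ε ^ 2 with hsqdef
    set Dd : ℝ → ℝ := fun s => Real.sqrt (sq s) with hDdef
    set Nn : ℝ → ℝ := fun s => ⟪ρ' s, ρ s⟫ with hNdef
    have hsqpos : ∀ s, 0 < sq s := fun s =>
      add_pos_of_nonneg_of_pos real_inner_self_nonneg (by positivity)
    have hDpos : ∀ s, 0 < Dd s := fun s => Real.sqrt_pos.2 (hsqpos s)
    have hDsq : ∀ s, Dd s ^ 2 = sq s := fun s => Real.sq_sqrt (hsqpos s).le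
    have hsq' : ∀ s ∈ Set.Ioo a b, HasDerivAt sq (2 * Nn s) s := by
      intro s hs
      have h := ((hρd s hs).inner ℝ (hρd s hs)).add_const (ε ^ 2)
      refine h.congr_deriv ?_
      simp only [Nn]
      rw [real_inner_comm (ρ s) (ρ' s)]
      ring
    have hD' : ∀ s ∈ Set.Ioo a b, HasDerivAt Dd (Nn s / Dd s) s := by
      intro s hs
      have h := (Real.hasDerivAt_sqrt (hsqpos s).ne').comp s (hsq' s hs)
      refine h.congr_deriv ?_
      have : Real.sqrt (sq s) ≠ 0 := (hDpos s).ne'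
      field_simp [Dd]
      ring
    have hN' : ∀ s ∈ Set.Ioo a b,
        HasDerivAt Nn (⟪ρ' s, ρ' s⟫ + ⟪ρ'' s, ρ s⟫) s := fun s hs =>
      (hρd2 s hs).inner ℝ (hρd s hs)
    set u : ℝ → ℝ := fun s => Dd s - ε - g s with hudef
    set u' : ℝ → ℝ := fun s => Nn s / Dd s - g' s with hu'def
    set u'' : ℝ → ℝ := fun s =>
      ((⟪ρ'' s, ρ s⟫ + ⟪ρ' s, ρ' s⟫) / Dd s - (Nn s) ^ 2 / (Dd s) ^ 3) + m s with hu''def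
    have hu' : ∀ s ∈ Set.Ioo a b, HasDerivAt u (u' s) s := fun s hs =>
      ((hD' s hs).sub_const ε).sub (hg' s hs)
    have hu'' : ∀ s ∈ Set.Ioo a b, HasDerivAt u' (u'' s) s := by
      intro s hs
      have hdiv := (hN' s hs).div (hD' s hs) (hDpos s).ne'
      have h := hdiv.sub (hg'' s hs)
      refine h.congr_deriv ?_
      have hD : Dd s ≠ 0 := (hDpos s).ne'
      simp only [u'', sub_neg_eq_add]
      field_simp
      ring
    have hu''nn : ∀ s ∈ Set.Ioo a b, 0 ≤ u'' s := by
      intro s hs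
      obtain ⟨H, hHnn, hHeq⟩ := hH s hs
      have hD : 0 < Dd s := hDpos s
      have hρle : ‖ρ s‖ ≤ Dd s := by
        rw [hDdef]
        calc ‖ρ s‖ = Real.sqrt (⟪ρ s, ρ s⟫) := by
              rw [real_inner_self_eq_norm_sq, Real.sqrt_sq (norm_nonneg _)]
          _ ≤ Real.sqrt (sq s) := Real.sqrt_le_sqrt (by simp [sq]; positivity)
      have h1 : -(m s) * ‖ρ s‖ ≤ ⟪ρ'' s, ρ s⟫ := by
        rw [hHeq, inner_sub_left]
        have h2 := hHnn (ρ s)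
        have h3 : ⟪f s, ρ s⟫ ≤ ‖f s‖ * ‖ρ s‖ := real_inner_le_norm _ _
        simp only [hmdef]
        linarith
      have hcs : (Nn s) ^ 2 ≤ ⟪ρ' s, ρ' s⟫ * ⟪ρ s, ρ s⟫ := by
        have := real_inner_mul_inner_self_le (ρ' s) (ρ s)
        simpa [Nn, pow_two] using this
      have hrr : ⟪ρ s, ρ s⟫ ≤ Dd s ^ 2 := by
        rw [hDsq]; simp [sq]; positivity
      have hr'0 : (0:ℝ) ≤ ⟪ρ' s, ρ' s⟫ := real_inner_self_nonneg
      have hnum : 0 ≤ (⟪ρ'' s, ρ s⟫ + ⟪ρ' s, ρ' s⟫) * Dd s ^ 2 - (Nn s) ^ 2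
          + m s * Dd s ^ 3 := by
        nlinarith [mul_le_mul_of_nonneg_left hrr hr'0,
          mul_le_mul_of_nonneg_right h1 (sq_nonneg (Dd s)),
          mul_nonneg (hm0 s) (mul_nonneg hD.le (sq_nonneg (Dd s))),
          mul_le_mul_of_nonneg_left hρle (hm0 s), sq_nonneg (Dd s),
          mul_le_mul_of_nonneg_left (mul_le_mul_of_nonneg_left hρle (hm0 s)) (sq_nonneg (Dd s))]
      have hform : u'' s = ((⟪ρ'' s, ρ s⟫ + ⟪ρ' s, ρ' s⟫) * Dd s ^ 2 - (Nn s) ^ 2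
          + m s * Dd s ^ 3) / Dd s ^ 3 := by
        simp only [u'']
        field_simp
      rw [hform]
      positivity
    have huc : ContinuousOn u (Set.Icc a b) := by
      have hDc : ContinuousOn Dd (Set.Icc a b) :=
        Real.continuous_sqrt.comp_continuousOn ((hρc.inner hρc).add continuousOn_const)
      exact (hDc.sub continuousOn_const).sub hgc
    have hua : u a = 0 := by
      simp [u, Dd, sq, hρa, hga, Real.sqrt_sq hε.le]
    have hub : u b = 0 := by
      simp [u, Dd, sq, hρb, hgb, Real.sqrt_sq hε.le]
    have := nahm_nonpos_aux hab huc hu' hu'' hu''nn hua.le hub.le s₀ hs₀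
    have hρle : ‖ρ s₀‖ ≤ Dd s₀ := by
      rw [hDdef]
      calc ‖ρ s₀‖ = Real.sqrt (⟪ρ s₀, ρ s₀⟫) := by
            rw [real_inner_self_eq_norm_sq, Real.sqrt_sq (norm_nonneg _)]
        _ ≤ Real.sqrt (sq s₀) := Real.sqrt_le_sqrt (by simp [sq]; positivity)
    simp only [u] at this
    linarith
  constructor
  · exact fun s hs => (key s hs).trans (hgbound s hs)
  · intro s hs
    have hI0 : (0:ℝ) ≤ ∫ τ in a..b, m τ :=
      intervalIntegral.integral_nonneg hab.le fun τ _ => hm0 τ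
    have hq : (b - s) * (s - a) / (b - a) ≤ (b - a) / 4 := by
      rw [div_le_div_iff₀ hba (by norm_num)]
      nlinarith [sq_nonneg (b + a - 2 * s)]
    exact ((key s hs).trans (hgbound s hs)).trans
      (mul_le_mul_of_nonneg_right hq hI0)
end

section
/- Let E and F be finite-dimensional real normed vector spaces, let μ : E → F be a continuous map satisfying μ(t·q) = t²·μ(q) for all t > 0 and q ∈ E, and let T : E → E' be a linear map into a real normed space E' such that T q ≠ 0 for every q ≠ 0 with μ(q) = 0. Then for every c ∈ F there exist λ > 0 and R > 0 such that ‖T q‖ ≥ λ‖q‖ for every q ∈ E with μ(q) = c and ‖q‖ ≥ R. -/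
/-!
On the unit sphere, which is compact, `‖μ u‖ + ‖T u‖` is continuous and has no zero, so it is
bounded below by some `m > 0`. Rescaling `q` to `u = ‖q‖⁻¹ • q` turns this into
`m ‖q‖ ≤ ‖μ q‖ / ‖q‖ + ‖T q‖`; on the level set `μ q = c` the first term is at most `‖c‖`
once `‖q‖ ≥ 1`, hence negligible against `m ‖q‖` for large `‖q‖`.
-/

theorem IsCompact.exists_pos_le_norm_add_norm {X E₁ E₂ : Type*} [TopologicalSpace X]
    [NormedAddCommGroup E₁] [NormedAddCommGroup E₂] {K : Set X} (hK : IsCompact K)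
    {f : X → E₁} {g : X → E₂} (hf : ContinuousOn f K) (hg : ContinuousOn g K)
    (hfg : ∀ x ∈ K, f x = 0 → g x ≠ 0) :
    ∃ m : ℝ, 0 < m ∧ ∀ x ∈ K, m ≤ ‖f x‖ + ‖g x‖ := by
  refine hK.exists_forall_le' (hf.norm.add hg.norm) fun x hx => ?_
  by_cases hfx : f x = 0
  · simpa [hfx] using hfg x hx hfx
  · exact add_pos_of_pos_of_nonneg (norm_pos_iff.2 hfx) (norm_nonneg _)

theorem mul_norm_le_of_le_on_unitSphere {E F E' : Type*}
    [NormedAddCommGroup E] [NormedSpace ℝ E] [NormedAddCommGroup F] [NormedSpace ℝ F]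
    [NormedAddCommGroup E'] [NormedSpace ℝ E'] {μ : E → F}
    (hμh : ∀ t : ℝ, 0 < t → ∀ q : E, μ (t • q) = (t ^ 2) • μ q) (T : E →ₗ[ℝ] E') {m : ℝ}
    (hm : ∀ u ∈ Metric.sphere (0 : E) 1, m ≤ ‖μ u‖ + ‖T u‖) {q : E} (hq : q ≠ 0) :
    m * ‖q‖ ≤ ‖μ q‖ / ‖q‖ + ‖T q‖ := by
  have hr : 0 < ‖q‖ := norm_pos_iff.2 hq
  have hu : ‖q‖⁻¹ • q ∈ Metric.sphere (0 : E) 1 := by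
    simp [norm_smul, hr.ne']
  have hμu : ‖μ (‖q‖⁻¹ • q)‖ = ‖μ q‖ / ‖q‖ ^ 2 := by
    rw [hμh _ (inv_pos.2 hr), norm_smul, norm_pow, norm_inv, norm_norm, inv_pow,
      inv_mul_eq_div]
  have hTu : ‖T (‖q‖⁻¹ • q)‖ = ‖T q‖ / ‖q‖ := by
    rw [map_smul, norm_smul, norm_inv, norm_norm, inv_mul_eq_div]
  have h := hm _ hu
  rw [hμu, hTu] at h
  calc m * ‖q‖ ≤ ‖q‖ * (‖μ q‖ / ‖q‖ ^ 2 + ‖T q‖ / ‖q‖) := by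
        rw [mul_comm]; gcongr
    _ = ‖μ q‖ / ‖q‖ + ‖T q‖ := by field_simp

theorem fundamental_vector_field_growth_general
    {E F E' : Type*}
    [NormedAddCommGroup E] [NormedSpace ℝ E] [FiniteDimensional ℝ E]
    [NormedAddCommGroup F] [NormedSpace ℝ F]
    [NormedAddCommGroup E'] [NormedSpace ℝ E']
    (μ : E → F) (hμc : Continuous μ)
    (hμh : ∀ t : ℝ, 0 < t → ∀ q : E, μ (t • q) = (t ^ 2) • μ q)
    (T : E →ₗ[ℝ] E')
    (hT : ∀ q : E, q ≠ 0 → μ q = 0 → T q ≠ 0) :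
    ∀ c : F, ∃ lam : ℝ, 0 < lam ∧ ∃ R : ℝ, 0 < R ∧
      ∀ q : E, μ q = c → R ≤ ‖q‖ → lam * ‖q‖ ≤ ‖T q‖ := by
  intro c
  obtain ⟨m, hm, hmS⟩ := (isCompact_sphere (0 : E) 1).exists_pos_le_norm_add_norm
    hμc.continuousOn T.continuous_of_finiteDimensional.continuousOn
    fun u hu hμu => hT u (ne_zero_of_mem_unit_sphere ⟨u, hu⟩) hμu
  refine ⟨m / 2, half_pos hm, 1 + 2 * ‖c‖ / m, by positivity, fun q hq hR => ?_⟩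
  have hq1 : 1 ≤ ‖q‖ := le_trans (le_add_of_nonneg_right (by positivity)) hR
  have hc : ‖c‖ ≤ m / 2 * ‖q‖ := by
    have : 2 * ‖c‖ / m ≤ ‖q‖ := le_trans (le_add_of_nonneg_left zero_le_one) hR
    rw [div_le_iff₀ hm] at this
    linarith
  have hμq : ‖μ q‖ / ‖q‖ ≤ ‖c‖ := hq ▸ div_le_self (norm_nonneg _) hq1
  have hgrowth := mul_norm_le_of_le_on_unitSphere hμh T hmS (norm_pos_iff.1 (by linarith))
  linarith

/-- Growth estimate for finite-dimensional hyperkähler quotients: if `μ : E → F` is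
continuous and homogeneous of degree `2`, and `T` is a linear map nonvanishing on
`μ⁻¹(0) \ {0}`, then for every `c` there are `λ > 0`, `R > 0` with
`‖T q‖ ≥ λ‖q‖` whenever `μ(q) = c` and `‖q‖ ≥ R`. -/
theorem fundamental_vector_field_growth
    {E F E' : Type*}
    [NormedAddCommGroup E] [NormedSpace ℝ E] [FiniteDimensional ℝ E]
    [NormedAddCommGroup F] [NormedSpace ℝ F] [FiniteDimensional ℝ F]
    [NormedAddCommGroup E'] [NormedSpace ℝ E']
    (μ : E → F) (hμc : Continuous μ)
    (hμh : ∀ t : ℝ, 0 < t → ∀ q : E, μ (t • q) = (t ^ 2) • μ q)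
    (T : E →ₗ[ℝ] E')
    (hT : ∀ q : E, q ≠ 0 → μ q = 0 → T q ≠ 0) :
    ∀ c : F, ∃ lam : ℝ, 0 < lam ∧ ∃ R : ℝ, 0 < R ∧
      ∀ q : E, μ q = c → R ≤ ‖q‖ → lam * ‖q‖ ≤ ‖T q‖ :=
  fundamental_vector_field_growth_general μ hμc hμh T hT
end

section
/- Let H be a real inner product space, G a real normed vector space, and l : G → H a continuous linear map. For v ∈ H let Λ(v) be the continuous linear functional on G defined by Λ(v)(ρ) = ⟨v, l ρ⟩, and let ‖Λ(v)‖ denote its operator norm. If C ≥ 0 is such that ‖ρ‖ ≤ C‖Λ(l ρ)‖ for all ρ ∈ G, then ‖l ρ‖ ≤ √C · ‖Λ(l ρ)‖ for all ρ ∈ G. -/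
open scoped RealInnerProductSpace

theorem Real.le_sqrt_mul_of_sq_le_mul {x a b C : ℝ} (ha : 0 ≤ a) (hx : x ^ 2 ≤ a * b)
    (hb : b ≤ C * a) : x ≤ √C * a :=
  calc x ≤ √(C * a ^ 2) := Real.le_sqrt_of_sq_le (by nlinarith)
    _ = √C * a := by rw [Real.sqrt_mul' C (sq_nonneg a), Real.sqrt_sq ha]

theorem sq_norm_le_opNorm_mul_norm_of_apply_eq_inner
    {H G : Type*} [NormedAddCommGroup H] [InnerProductSpace ℝ H]
    [NormedAddCommGroup G] [NormedSpace ℝ G]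
    (l : G →L[ℝ] H) (Lam : H → (G →L[ℝ] ℝ))
    (hLam : ∀ (v : H) (ρ : G), Lam v ρ = ⟪v, l ρ⟫) (ρ : G) :
    ‖l ρ‖ ^ 2 ≤ ‖Lam (l ρ)‖ * ‖ρ‖ :=
  calc ‖l ρ‖ ^ 2 = Lam (l ρ) ρ := by rw [hLam, real_inner_self_eq_norm_sq]
    _ ≤ ‖Lam (l ρ)‖ * ‖ρ‖ := (le_abs_self _).trans ((Lam (l ρ)).le_opNorm ρ)

theorem lemma_2_9_second_inequality_general
    {H G : Type*} [NormedAddCommGroup H] [InnerProductSpace ℝ H]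
    [NormedAddCommGroup G] [NormedSpace ℝ G]
    (l : G →L[ℝ] H) (Lam : H → (G →L[ℝ] ℝ))
    (hLam : ∀ (v : H) (ρ : G), Lam v ρ = ⟪v, l ρ⟫)
    (C : ℝ)
    (hbound : ∀ ρ : G, ‖ρ‖ ≤ C * ‖Lam (l ρ)‖) :
    ∀ ρ : G, ‖l ρ‖ ≤ Real.sqrt C * ‖Lam (l ρ)‖ := fun ρ =>
  Real.le_sqrt_mul_of_sq_le_mul (norm_nonneg _)
    (sq_norm_le_opNorm_mul_norm_of_apply_eq_inner l Lam hLam ρ) (hbound ρ)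

/-- Second inequality of Lemma 2.9: with `Λ(v)(ρ) = ⟨v, l ρ⟩`, if `‖ρ‖ ≤ C‖Λ(l ρ)‖`
for all `ρ`, then `‖l ρ‖ ≤ √C · ‖Λ(l ρ)‖` for all `ρ`. -/
theorem lemma_2_9_second_inequality
    {H G : Type*} [NormedAddCommGroup H] [InnerProductSpace ℝ H]
    [NormedAddCommGroup G] [NormedSpace ℝ G]
    (l : G →L[ℝ] H) (Lam : H → (G →L[ℝ] ℝ))
    (hLam : ∀ (v : H) (ρ : G), Lam v ρ = ⟪v, l ρ⟫)
    (C : ℝ) (hC : 0 ≤ C)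
    (hbound : ∀ ρ : G, ‖ρ‖ ≤ C * ‖Lam (l ρ)‖) :
    ∀ ρ : G, ‖l ρ‖ ≤ Real.sqrt C * ‖Lam (l ρ)‖ :=
  lemma_2_9_second_inequality_general l Lam hLam C hbound
end

section
/- Let a < b be real numbers and h : [a,b] → ℝ continuous. If u : [a,b] → ℝ is continuous on [a,b], twice differentiable on (a,b), and satisfies u''(s) = h(s) for all s ∈ (a,b) together with u(a) = u(b) = 0, then sup_{s∈[a,b]} |u(s)| ≤ ((b−a)/4) · ∫_a^b |h(τ)| dτ. -/
open Set MeasureTheory intervalIntegral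

/-- The computation `N(0) = (b-a)/4`: if `u'' = h` on `(a,b)` with
`u(a) = u(b) = 0`, then `|u(s)| ≤ ((b-a)/4) ∫_a^b |h|` for all `s ∈ [a,b]`. -/
theorem green_sup_bound
    (a b : ℝ) (hab : a < b)
    (h : ℝ → ℝ) (hh : ContinuousOn h (Set.Icc a b))
    (u u' : ℝ → ℝ)
    (huc : ContinuousOn u (Set.Icc a b))
    (hud : ∀ s ∈ Set.Ioo a b, HasDerivAt u (u' s) s)
    (hud2 : ∀ s ∈ Set.Ioo a b, HasDerivAt u' (h s) s)
    (hua : u a = 0) (hub : u b = 0) :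
    ∀ s ∈ Set.Icc a b, |u s| ≤ (b - a) / 4 * ∫ τ in a..b, |h τ| := by
  set M := ∫ τ in a..b, |h τ| with hMdef
  have hM0 : 0 ≤ M := intervalIntegral.integral_nonneg hab.le (fun x _ => abs_nonneg _)
  have huIcc : Set.uIcc a b = Set.Icc a b := Set.uIcc_of_le hab.le
  have hMint : IntervalIntegrable (fun τ => |h τ|) volume a b :=
    ContinuousOn.intervalIntegrable (huIcc ▸ hh.abs)
  -- key: difference of u' bounded by M
  have key : ∀ t t', a < t → t ≤ t' → t' < b → |u' t' - u' t| ≤ M := by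
    intro t t' hat htt' ht'b
    have hsub : Set.uIcc t t' ⊆ Set.Ioo a b := by
      rw [Set.uIcc_of_le htt']
      exact fun x hx => ⟨lt_of_lt_of_le hat hx.1, lt_of_le_of_lt hx.2 ht'b⟩
    have hint : IntervalIntegrable h volume t t' :=
      (hh.mono (hsub.trans Set.Ioo_subset_Icc_self)).intervalIntegrable
    have heq : ∫ τ in t..t', h τ = u' t' - u' t :=
      intervalIntegral.integral_eq_sub_of_hasDerivAt (fun x hx => hud2 x (hsub hx)) hint
    rw [← heq]
    calc |∫ τ in t..t', h τ| ≤ ∫ τ in t..t', |h τ| :=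
          intervalIntegral.abs_integral_le_integral_abs htt'
      _ ≤ M := by
          refine intervalIntegral.integral_mono_interval ?_ htt' ?_ ?_ hMint
          · exact hat.le
          · exact ht'b.le
          · exact Filter.Eventually.of_forall fun x => abs_nonneg _
  intro s hs
  rcases eq_or_lt_of_le hs.1 with rfl | has
  · rw [hua, abs_zero]; exact mul_nonneg (by linarith) hM0
  rcases eq_or_lt_of_le hs.2 with rfl | hsb
  · rw [hub, abs_zero]; exact mul_nonneg (by linarith) hM0
  -- continuity of u' on Ioo
  have hu'c : ContinuousOn u' (Set.Ioo a b) :=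
    fun x hx => ((hud2 x hx).differentiableAt.continuousAt).continuousWithinAt
  -- u' locally bounded & integrable on subintervals
  have hbound : ∀ x ∈ Set.Ioo a b, |u' x| ≤ |u' s| + M := by
    intro x hx
    rcases le_total x s with hxs | hsx
    · have := key x s hx.1 hxs hsb
      have h2 := abs_sub_abs_le_abs_sub (u' x) (u' s)
      rw [abs_sub_comm] at h2
      linarith
    · have := key s x has hsx hx.2
      have h2 := abs_sub_abs_le_abs_sub (u' x) (u' s)
      linarith
  have hintOn : ∀ c d : ℝ, Set.Ioc c d ⊆ Set.Ioo a b → c ≤ d →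
      IntervalIntegrable u' volume c d := by
    intro c d hsub hcd
    rw [intervalIntegrable_iff_integrableOn_Ioc_of_le hcd]
    refine ⟨(hu'c.mono hsub).aestronglyMeasurable measurableSet_Ioc, ?_⟩
    apply MeasureTheory.HasFiniteIntegral.restrict_of_bounded (C := |u' s| + M)
      measure_Ioc_lt_top
    exact (ae_restrict_iff' measurableSet_Ioc).mpr
      (Filter.Eventually.of_forall fun x hx => by
        rw [Real.norm_eq_abs]; exact hbound x (hsub hx))
  have hint_as : IntervalIntegrable u' volume a s :=
    hintOn a s (fun x hx => ⟨hx.1, lt_of_le_of_lt hx.2 hsb⟩) (le_of_lt has)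
  have hint_sb : IntervalIntegrable u' volume s b := by
    -- Ioc s b includes b; handle via Ioc integrability with a.e. argument? use Ioo instead
    rw [intervalIntegrable_iff_integrableOn_Ioc_of_le hsb.le]
    rw [integrableOn_Ioc_iff_integrableOn_Ioo]
    refine ⟨(hu'c.mono (fun x hx => ⟨has.trans hx.1, hx.2⟩)).aestronglyMeasurable
      measurableSet_Ioo, ?_⟩
    apply MeasureTheory.HasFiniteIntegral.restrict_of_bounded (C := |u' s| + M)
      measure_Ioo_lt_top
    exact (ae_restrict_iff' measurableSet_Ioo).mpr
      (Filter.Eventually.of_forall fun x hx => by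
        rw [Real.norm_eq_abs]; exact hbound x ⟨has.trans hx.1, hx.2⟩)
  -- FTC on [a,s] and [s,b]
  have ftc1 : ∫ t in a..s, u' t = u s := by
    have := intervalIntegral.integral_eq_sub_of_hasDeriv_right_of_le has.le
      (huc.mono (Set.Icc_subset_Icc le_rfl hs.2))
      (fun x hx => (hud x ⟨hx.1, lt_of_lt_of_le hx.2 hs.2⟩).hasDerivWithinAt) hint_as
    rw [this, hua, sub_zero]
  have ftc2 : ∫ t in s..b, u' t = - u s := by
    have := intervalIntegral.integral_eq_sub_of_hasDeriv_right_of_le hsb.le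
      (huc.mono (Set.Icc_subset_Icc hs.1 le_rfl))
      (fun x hx => (hud x ⟨has.trans hx.1, hx.2⟩).hasDerivWithinAt) hint_sb
    rw [this, hub, zero_sub]
  -- main estimate
  set B := ∫ t in s..b, u' t with hBdef
  have hinner : ∀ t, a < t → t ≤ s → |(b - s) * u' t - B| ≤ M * (b - s) := by
    intro t hat hts
    have heq : (b - s) * u' t - B = ∫ t' in s..b, (u' t - u' t') := by
      rw [intervalIntegral.integral_sub intervalIntegrable_const hint_sb,
        intervalIntegral.integral_const, smul_eq_mul, mul_comm]
    rw [heq, ← Real.norm_eq_abs]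
    have := intervalIntegral.norm_integral_le_of_norm_le_const_ae (C := M)
      (f := fun t' => u' t - u' t') (a := s) (b := b) ?_
    · calc ‖∫ t' in s..b, (u' t - u' t')‖ ≤ M * |b - s| := this
        _ = M * (b - s) := by rw [abs_of_nonneg (by linarith)]
    · have : ∀ᵐ x : ℝ, x ≠ b := by
        rw [MeasureTheory.ae_iff]
        have hset : {x : ℝ | ¬ x ≠ b} = {b} := by ext x; simp
        rw [hset]
        exact MeasureTheory.measure_singleton b
      filter_upwards [this] with x hxb hxmem
      rw [Set.uIoc_of_le hsb.le] at hxmem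
      have hxb' : x < b := lt_of_le_of_ne hxmem.2 hxb
      rw [Real.norm_eq_abs, abs_sub_comm]
      exact key t x hat (hts.trans hxmem.1.le) hxb'
  have houter : |(b - a) * u s| ≤ (s - a) * (M * (b - s)) := by
    have heq : (b - a) * u s = ∫ t in a..s, ((b - s) * u' t - B) := by
      rw [intervalIntegral.integral_sub (hint_as.const_mul _) intervalIntegrable_const,
        intervalIntegral.integral_const_mul, ftc1, intervalIntegral.integral_const,
        smul_eq_mul, ftc2]
      ring
    rw [heq, ← Real.norm_eq_abs]
    have := intervalIntegral.norm_integral_le_of_norm_le_const (C := M * (b - s))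
      (f := fun t => (b - s) * u' t - B) (a := a) (b := s) ?_
    · calc ‖∫ t in a..s, ((b - s) * u' t - B)‖ ≤ M * (b - s) * |s - a| := this
        _ = (s - a) * (M * (b - s)) := by rw [abs_of_nonneg (by linarith)]; ring
    · intro x hx
      rw [Set.uIoc_of_le has.le] at hx
      rw [Real.norm_eq_abs]
      exact hinner x hx.1 hx.2
  -- conclude
  have h1 : |(b - a) * u s| = (b - a) * |u s| := by
    rw [abs_mul, abs_of_nonneg (by linarith : (0:ℝ) ≤ b - a)]
  rw [h1] at houter
  nlinarith [sq_nonneg (s - a - (b - s)), abs_nonneg (u s), mul_nonneg hM0 (sub_nonneg.mpr hsb.le)]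
end

section
/- Let E be a real inner product space, I ⊆ ℝ an open interval, and ρ : I → E a differentiable function which is twice differentiable at a point s ∈ I with ρ(s) ≠ 0. Then the function n : t ↦ ‖ρ(t)‖ is twice differentiable at s and satisfies ‖ρ(s)‖ · n''(s) ≥ ⟨ρ''(s), ρ(s)⟩. -/
open scoped RealInnerProductSpace

/-- If `ρ` is differentiable on an open interval `I` and twice differentiable at
`s ∈ I` with `ρ(s) ≠ 0`, then `n(t) = ‖ρ(t)‖` is twice differentiable at `s` and
`‖ρ(s)‖ · n''(s) ≥ ⟨ρ''(s), ρ(s)⟩`. -/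
theorem norm_second_derivative_inequality
    {E : Type*} [NormedAddCommGroup E] [InnerProductSpace ℝ E]
    (I : Set ℝ) (hIopen : IsOpen I) (hIconn : I.OrdConnected)
    (ρ ρ' : ℝ → E) (ρ'' : E) (s : ℝ) (hs : s ∈ I)
    (hρd : ∀ t ∈ I, HasDerivAt ρ (ρ' t) t)
    (hρd2 : HasDerivAt ρ' ρ'' s)
    (hρs : ρ s ≠ 0) :
    ∃ n' : ℝ → ℝ, ∃ n'' : ℝ,
      (∀ᶠ t in nhds s, HasDerivAt (fun r => ‖ρ r‖) (n' t) t) ∧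
      HasDerivAt n' n'' s ∧
      ⟪ρ'', ρ s⟫ ≤ ‖ρ s‖ * n'' := by
  set g : ℝ → ℝ := fun t => ⟪ρ' t, ρ t⟫ with hg
  set n' : ℝ → ℝ := fun t => g t / ‖ρ t‖ with hn'
  -- derivative of the norm at points where ρ ≠ 0 and t ∈ I
  have key : ∀ t ∈ I, ρ t ≠ 0 → HasDerivAt (fun r => ‖ρ r‖) (n' t) t := by
    intro t ht hne
    have hinner : HasDerivAt (fun r => ⟪ρ r, ρ r⟫) (⟪ρ t, ρ' t⟫ + ⟪ρ' t, ρ t⟫) t :=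
      (hρd t ht).inner ℝ (hρd t ht)
    have hpos : (0:ℝ) < ⟪ρ t, ρ t⟫ := by
      rw [real_inner_self_eq_norm_sq]
      exact pow_pos (norm_pos_iff.2 hne) 2
    have hsqrt := (Real.hasDerivAt_sqrt (ne_of_gt hpos)).comp t hinner
    have heq : (fun r => Real.sqrt ⟪ρ r, ρ r⟫) = fun r => ‖ρ r‖ := by
      funext r; rw [norm_eq_sqrt_real_inner]
    rw [Function.comp_def, heq] at hsqrt
    convert hsqrt using 1
    · rfl
    · rfl
    have hnn : ‖ρ t‖ ≠ 0 := norm_ne_zero_iff.2 hne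
    simp only [hn', hg, real_inner_comm (ρ t) (ρ' t), ← norm_eq_sqrt_real_inner]
    field_simp
    ring
  -- ρ ≠ 0 near s
  have hcont : ContinuousAt ρ s := (hρd s hs).continuousAt
  have hU : ∀ᶠ t in nhds s, t ∈ I ∧ ρ t ≠ 0 := by
    filter_upwards [hIopen.mem_nhds hs, hcont (isOpen_compl_singleton.mem_nhds hρs)] with t h1 h2
    exact ⟨h1, h2⟩
  have hns : ‖ρ s‖ ≠ 0 := norm_ne_zero_iff.2 hρs
  -- derivative of g at s
  have hgd : HasDerivAt g (⟪ρ' s, ρ' s⟫ + ⟪ρ'', ρ s⟫) s := hρd2.inner ℝ (hρd s hs)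
  -- derivative of ‖ρ ·‖ at s
  have hnorm : HasDerivAt (fun r => ‖ρ r‖) (n' s) s := key s hs hρs
  have hdiv : HasDerivAt n'
      (((⟪ρ' s, ρ' s⟫ + ⟪ρ'', ρ s⟫) * ‖ρ s‖ - g s * n' s) / (‖ρ s‖ ^ 2)) s :=
    hgd.div hnorm hns
  refine ⟨n', _, hU.mono fun t ht => key t ht.1 ht.2, hdiv, ?_⟩
  have hCS : g s * g s ≤ ⟪ρ' s, ρ' s⟫ * ⟪ρ s, ρ s⟫ := real_inner_mul_inner_self_le _ _
  have hsq : ⟪ρ s, ρ s⟫ = ‖ρ s‖ ^ 2 := real_inner_self_eq_norm_sq (ρ s)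
  have hpos : (0:ℝ) < ‖ρ s‖ := norm_pos_iff.2 hρs
  rw [hsq] at hCS
  have : ‖ρ s‖ * (((⟪ρ' s, ρ' s⟫ + ⟪ρ'', ρ s⟫) * ‖ρ s‖ - g s * n' s) / (‖ρ s‖ ^ 2))
      = ⟪ρ'', ρ s⟫ + (⟪ρ' s, ρ' s⟫ - g s * g s / ‖ρ s‖ ^ 2) := by
    simp only [hn']
    field_simp
    ring
  rw [this]
  have : g s * g s / ‖ρ s‖ ^ 2 ≤ ⟪ρ' s, ρ' s⟫ := by
    rw [div_le_iff₀ (by positivity)]; exact hCS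
  linarith
end

section
/- Let E be a real inner product space, I ⊆ ℝ an open interval, and ρ : I → E a differentiable function which is twice differentiable at a point s ∈ I with ρ(s) ≠ 0. Suppose ρ''(s) = A(ρ(s)) − f, where A : E → E is a linear map satisfying ⟨A v, v⟩ ≥ μ‖v‖² for all v ∈ E (with μ ≥ 0 a real number) and f ∈ E. Then the function n : t ↦ ‖ρ(t)‖ is twice differentiable at s and n''(s) ≥ μ‖ρ(s)‖ − ‖f‖. -/
open scoped RealInnerProductSpace

lemma norm_deriv_aux {E : Type*} [NormedAddCommGroup E] [InnerProductSpace ℝ E]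
    {ρ : ℝ → E} {v : E} {t : ℝ} (h : HasDerivAt ρ v t) (ht : ρ t ≠ 0) :
    HasDerivAt (fun r => ‖ρ r‖) (⟪v, ρ t⟫ / ‖ρ t‖) t := by
  have hq : ⟪ρ t, ρ t⟫ ≠ 0 := by
    simpa [inner_self_eq_zero] using ht
  have h1 : HasDerivAt (fun r => Real.sqrt ⟪ρ r, ρ r⟫)
      ((⟪ρ t, v⟫ + ⟪v, ρ t⟫) / (2 * Real.sqrt ⟪ρ t, ρ t⟫)) t :=
    (h.inner ℝ h).sqrt hq
  have hnorm : ∀ r, Real.sqrt ⟪ρ r, ρ r⟫ = ‖ρ r‖ := by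
    intro r
    rw [real_inner_self_eq_norm_sq, Real.sqrt_sq (norm_nonneg _)]
  have h2 : (⟪ρ t, v⟫ + ⟪v, ρ t⟫) / (2 * Real.sqrt ⟪ρ t, ρ t⟫) = ⟪v, ρ t⟫ / ‖ρ t‖ := by
    rw [hnorm, real_inner_comm (ρ t) v]
    ring
  rw [h2] at h1
  convert h1 using 2 with r
  rw [hnorm]

/-- If `ρ` is differentiable on an open interval `I`, twice differentiable at
`s ∈ I` with `ρ(s) ≠ 0`, and `ρ''(s) = A(ρ(s)) - f` with `⟨A v, v⟩ ≥ μ‖v‖²`,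
`μ ≥ 0`, then `n(t) = ‖ρ(t)‖` is twice differentiable at `s` and
`n''(s) ≥ μ‖ρ(s)‖ - ‖f‖`. -/
theorem norm_second_derivative_lower_bound
    {E : Type*} [NormedAddCommGroup E] [InnerProductSpace ℝ E]
    (I : Set ℝ) (hIopen : IsOpen I) (hIconn : I.OrdConnected)
    (ρ ρ' : ℝ → E) (ρ'' : E) (s : ℝ) (hs : s ∈ I)
    (hρd : ∀ t ∈ I, HasDerivAt ρ (ρ' t) t)
    (hρd2 : HasDerivAt ρ' ρ'' s)
    (hρs : ρ s ≠ 0)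
    (A : E →ₗ[ℝ] E) (μ : ℝ) (hμ : 0 ≤ μ)
    (hA : ∀ v : E, μ * ‖v‖ ^ 2 ≤ ⟪A v, v⟫)
    (f : E) (heq : ρ'' = A (ρ s) - f) :
    ∃ n' : ℝ → ℝ, ∃ n'' : ℝ,
      (∀ᶠ t in nhds s, HasDerivAt (fun r => ‖ρ r‖) (n' t) t) ∧
      HasDerivAt n' n'' s ∧
      μ * ‖ρ s‖ - ‖f‖ ≤ n'' := by
  set a := ‖ρ s‖ with ha_def
  have ha : 0 < a := norm_pos_iff.mpr hρs
  set n' : ℝ → ℝ := fun t => ⟪ρ' t, ρ t⟫ / ‖ρ t‖ with hn'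
  set c := ⟪ρ' s, ρ s⟫ with hc
  set b2 := ⟪ρ' s, ρ' s⟫ with hb2
  set d := ⟪ρ'', ρ s⟫ with hd
  refine ⟨n', ((d + b2) * a - c * (c / a)) / a ^ 2, ?_, ?_, ?_⟩
  · have hI : ∀ᶠ t in nhds s, t ∈ I := hIopen.eventually_mem hs
    have hne : ∀ᶠ t in nhds s, ρ t ≠ 0 :=
      ((hρd s hs).continuousAt).eventually_ne hρs
    filter_upwards [hI, hne] with t ht htne
    exact norm_deriv_aux (hρd t ht) htne
  · have hu : HasDerivAt (fun t => ⟪ρ' t, ρ t⟫) (⟪ρ' s, ρ' s⟫ + ⟪ρ'', ρ s⟫) s :=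
      hρd2.inner ℝ (hρd s hs)
    have hv : HasDerivAt (fun t => ‖ρ t‖) (c / a) s :=
      norm_deriv_aux (hρd s hs) hρs
    have := hu.div hv (ne_of_gt ha)
    exact this.congr_deriv (by rw [hd, hb2, ha_def, hc]; ring)
  · have hcs : c * c ≤ b2 * a ^ 2 := by
      have := real_inner_mul_inner_self_le (ρ' s) (ρ s)
      simpa [← hc, hb2, ha_def, real_inner_self_eq_norm_sq] using this
    have hfρ : ⟪f, ρ s⟫ ≤ ‖f‖ * a := real_inner_le_norm f (ρ s)
    have hdlb : μ * a ^ 2 - ‖f‖ * a ≤ d := by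
      have h1 : d = ⟪A (ρ s), ρ s⟫ - ⟪f, ρ s⟫ := by
        rw [hd, heq, inner_sub_left]
      have h2 := hA (ρ s)
      rw [h1]
      linarith
    rw [le_div_iff₀ (by positivity : (0:ℝ) < a ^ 2)]
    have hcc : c * (c / a) ≤ b2 * a := by
      rw [mul_div_assoc' , div_le_iff₀ ha]
      nlinarith
    nlinarith [sq_nonneg a, mul_pos ha ha]
end
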